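/- Let u be a word of length n, t > 0, and q a queue such that q(u) has at least one letter equal to t, is weakly decreasing up to level t, and has exactly |q| letters at most t. Then for each h ∈ {1,...,t−1}: {p : q(u)_p = h} ⪰ {p : u_p = h} ≫ {p : q(u)_p = h+1}, where A ⪰ B is componentwise domination of decreasing listings and A ≫ B means every element of A exceeds every element of B. -/

import Mathlib

open scoped BigOperators Classical

namespace MLQ

/-- Words of length `n` over the positive integers (letters are natural numbers,
with `0` unused). Sites are elements of `Fin n`, thought of cyclically. -/
abbrev Word (n : ℕ) := Fin n → ℕ

variable {n : ℕ}

section Cyclic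

variable [NeZero n]

/-- the site `s` steps (cyclically) to the right of `i` -/
def shiftR (i : Fin n) (s : ℕ) : Fin n :=
  ⟨(i.val + s) % n, Nat.mod_lt _ (Nat.pos_of_ne_zero (NeZero.ne n))⟩

/-- the site `s` steps (cyclically) to the left of `i` -/
def shiftL (i : Fin n) (s : ℕ) : Fin n :=
  ⟨(i.val + n - s % n) % n, Nat.mod_lt _ (Nat.pos_of_ne_zero (NeZero.ne n))⟩

/-- number of steps to go (cyclically) right from `i` to `j` -/
def cdistR (i j : Fin n) : ℕ := (j.val + n - i.val) % n

/-- number of steps to go (cyclically) left from `i` to `j` -/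
def cdistL (i j : Fin n) : ℕ := (i.val + n - j.val) % n

/-- first site of `s` weakly to the right (cyclically) of `i` -/
noncomputable def firstRight (i : Fin n) (s : Finset (Fin n)) (h : s.Nonempty) : Fin n :=
  shiftR i ((s.image (cdistR i)).min' (h.image _))

/-- first site of `s` weakly to the left (cyclically) of `i` -/
noncomputable def firstLeft (i : Fin n) (s : Finset (Fin n)) (h : s.Nonempty) : Fin n :=
  shiftL i ((s.image (cdistL i)).min' (h.image _))

/-- One step of Phase II of the queue algorithm: the state consists of the set of
still-unset sites of the queue together with the partial output word; processing
the letter at site `σ p`, it is placed (unchanged) on the first unset queue site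
weakly to the right of `σ p`. -/
noncomputable def step2 (u : Word n) (σ : Equiv.Perm (Fin n))
    (st : Finset (Fin n) × Word n) (p : Fin n) : Finset (Fin n) × Word n :=
  if h : st.1.Nonempty then
    let j := firstRight (σ p) st.1 h
    (st.1.erase j, Function.update st.2 j (u (σ p)))
  else st

/-- One step of Phase I of the queue algorithm: processing the letter at site `σ p`,
the letter `u (σ p) + 1` is placed on the first unset non-queue site weakly to the
left of `σ p`. -/
noncomputable def step1 (u : Word n) (σ : Equiv.Perm (Fin n))
    (st : Finset (Fin n) × Word n) (p : Fin n) : Finset (Fin n) × Word n :=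
  if h : st.1.Nonempty then
    let j := firstLeft (σ p) st.1 h
    (st.1.erase j, Function.update st.2 j (u (σ p) + 1))
  else st

/-- The two-phase queue algorithm computing `q(u)`, using the ordering permutation `σ`
(so the letters are processed in the order `u (σ 0), u (σ 1), …`): Phase II processes
the `|q|` smallest letters in increasing order, Phase I processes the remaining
letters in decreasing order. -/
noncomputable def queueActWith (q : Finset (Fin n)) (σ : Equiv.Perm (Fin n))
    (u : Word n) : Word n :=
  let s2 := ((List.finRange n).take q.card).foldl (step2 u σ) (q, fun _ => 0)
  let s1 := (((List.finRange n).drop q.card).reverse).foldl (step1 u σ) (qᶜ, s2.2)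
  s1.2

/-- `σ` is a valid ordering permutation for the word `u`. -/
def IsSorting (u : Word n) (σ : Equiv.Perm (Fin n)) : Prop := Monotone (u ∘ σ)

/-- The action `q(u)` of a queue `q` on a word `u`, using the canonical sorting
permutation. -/
noncomputable def act (q : Finset (Fin n)) (u : Word n) : Word n :=
  queueActWith q (Tuple.sort u) u

/-- The action of a tuple of queues `(q_1, …, q_k)` on a word (first `q_1`, then `q_2`, …). -/
noncomputable def mlqAct {k : ℕ} (qs : Fin k → Finset (Fin n)) (u : Word n) : Word n :=
  (List.ofFn qs).foldl (fun w q => act q w) u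

end Cyclic

/-- the type of a word: `typeOf u i` is the number of occurrences of the letter `i`. -/
def typeOf (u : Word n) : ℕ → ℕ := fun i => (Finset.univ.filter (fun p => u p = i)).card

/-- partial sums `p_i(m) = m_1 + ⋯ + m_i` of a type -/
def psum (m : ℕ → ℕ) (i : ℕ) : ℕ := ∑ j ∈ Finset.Icc 1 i, m j

/-- number of classes of a type: the largest `i` with `m i ≠ 0` -/
noncomputable def classes (m : ℕ → ℕ) : ℕ := sSup {i | m i ≠ 0}

/-- a packed word: all classes `1, …, ℓ` occur, where `ℓ` is the number of classes -/
def PackedWord (u : Word n) : Prop :=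
  (∀ p, 1 ≤ u p) ∧ ∀ j, 1 ≤ j → j ≤ classes (typeOf u) → typeOf u j ≠ 0

/-- merging classes `i` and `i+1` in a word: all letters `> i` are decremented -/
def mergeWord (i : ℕ) (u : Word n) : Word n := fun p => if i < u p then u p - 1 else u p

/-- merging classes `i` and `i+1` in a type -/
def mergeType (i : ℕ) (m : ℕ → ℕ) : ℕ → ℕ := fun j =>
  if j < i then m j else if j = i then m i + m (i + 1) else m (j + 1)

/-- `∨^(k)`: decrement all but the `k` smallest letters of a word (meaningful when
`k` is a partial sum of the type of the word). -/
def vee (k : ℕ) (u : Word n) : Word n := fun p =>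
  if (Finset.univ.filter (fun q => u q ≤ u p)).card ≤ k then u p else u p - 1

/-- iterated merge `∨_T` (the merges `∨_t` are applied for `t ∈ T` in decreasing order) -/
def mergeWordT (T : Finset ℕ) (u : Word n) : Word n :=
  (T.sort (· ≤ ·)).foldr mergeWord u

/-- iterated merge `∨_T` on types -/
def mergeTypeT (T : Finset ℕ) (m : ℕ → ℕ) : ℕ → ℕ :=
  (T.sort (· ≤ ·)).foldr mergeType m

/-- the weight of a queue, `∏_{j ∈ q} x_j` -/
noncomputable def qwt (q : Finset (Fin n)) : MvPolynomial (Fin n) ℤ :=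
  ∏ j ∈ q, MvPolynomial.X j

/-- the `σ`-twisted spectral weight `⟨u⟩_σ` of a word `u`, with respect to a type `m`
with `k + 1` classes: the sum of the weights of all `σ`-twisted multiline queues
`(q_1, …, q_k)` of type `m` (i.e. `|q_i| = p_{σ(i)}(m)`) with `u = q(1^n)`. -/
noncomputable def swt [NeZero n] (k : ℕ) (m : ℕ → ℕ) (σ : Equiv.Perm (Fin k))
    (u : Word n) : MvPolynomial (Fin n) ℤ :=
  ∑ qs ∈ Finset.univ.filter (fun qs : Fin k → Finset (Fin n) =>
      (∀ i, (qs i).card = psum m ((σ i : ℕ) + 1)) ∧ mlqAct qs (fun _ => 1) = u),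
    ∏ i, qwt (qs i)

/-- the (ordinary) spectral weight `⟨u⟩` of a packed word -/
noncomputable def spec [NeZero n] (u : Word n) : MvPolynomial (Fin n) ℤ :=
  swt (classes (typeOf u) - 1) (typeOf u) (Equiv.refl _) u

/-- the elementary symmetric polynomial `e_k(x_1, …, x_n)` -/
noncomputable def esym (n k : ℕ) : MvPolynomial (Fin n) ℤ :=
  ∑ t ∈ Finset.powersetCard k (Finset.univ : Finset (Fin n)), ∏ j ∈ t, MvPolynomial.X j

/-- the Gale order `A ⪰ B`: same cardinality, and the `k`-th largest element of `A`
is at least the `k`-th largest element of `B`, for every `k` -/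
def Dom (A B : Finset ℕ) : Prop :=
  A.card = B.card ∧ ∀ k < A.card,
    (B.sort (· ≤ ·)).reverse.getD k 0 ≤ (A.sort (· ≤ ·)).reverse.getD k 0

/-- `A ≫ B`: every element of `A` exceeds every element of `B` -/
def Gg (A B : Finset ℕ) : Prop := ∀ a ∈ A, ∀ b ∈ B, b < a

/-- a word is weakly decreasing up to level `t`: any two sites `p < q` with
`u q ≤ t` satisfy `u p ≥ u q` -/
def WDUpTo (t : ℕ) (u : Word n) : Prop :=
  ∀ p q : Fin n, p < q → u q ≤ t → u q ≤ u p

section Dual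

variable [NeZero n]

/-- the cyclic interval `{i, i+1, …, i+t}` -/
def cycInterval (i : Fin n) (t : ℕ) : Finset (Fin n) :=
  (Finset.range (t + 1)).image (shiftR i)

/-- the cyclic interval starting at `i` of length `t` is balanced for the
configuration `(q₁, q₂)` -/
def BalancedInterval (q1 q2 : Finset (Fin n)) (i : Fin n) (t : ℕ) : Prop :=
  (cycInterval i t ∩ q1).card = (cycInterval i t ∩ q2).card ∧
  ∀ l ≤ t, (cycInterval i l ∩ q2).card ≤ (cycInterval i l ∩ q1).card

/-- a site is balanced if it lies in some balanced interval; equivalently, its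
parenthesis (if any) is matched in the cyclic parenthesis-matching of the
configuration -/
def BalancedSite (q1 q2 : Finset (Fin n)) (j : Fin n) : Prop :=
  ∃ i t, t < n ∧ BalancedInterval q1 q2 i t ∧ j ∈ cycInterval i t

/-- the dual configuration: balanced sites keep their memberships, unbalanced
sites swap their memberships between the two queues -/
noncomputable def dualPair (q1 q2 : Finset (Fin n)) : Finset (Fin n) × Finset (Fin n) :=
  (Finset.univ.filter (fun j => if BalancedSite q1 q2 j then j ∈ q1 else j ∈ q2),
   Finset.univ.filter (fun j => if BalancedSite q1 q2 j then j ∈ q2 else j ∈ q1))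

/-- the operator `s_i` on tuples of queues, replacing the (0-indexed) adjacent pair
`(q_i, q_{i+1})` by its dual configuration -/
noncomputable def sOp {k : ℕ} (i : ℕ) (qs : Fin k → Finset (Fin n)) :
    Fin k → Finset (Fin n) := fun j =>
  if h : i + 1 < k then
    (if j.val = i then (dualPair (qs ⟨i, by omega⟩) (qs ⟨i + 1, h⟩)).1
     else if j.val = i + 1 then (dualPair (qs ⟨i, by omega⟩) (qs ⟨i + 1, h⟩)).2
     else qs j)
  else qs j

end Dual



/-! ### Auxiliary lemmas for `queue_act_interlace` -/

section InterlaceAux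
variable {n : ℕ} [NeZero n]

lemma cdistR_of_le' {i j : Fin n} (h : i.val ≤ j.val) : cdistR i j = j.val - i.val := by
  have hj := j.isLt
  have e : j.val + n - i.val = (j.val - i.val) + n := by omega
  rw [cdistR, e, Nat.add_mod_right, Nat.mod_eq_of_lt (by omega)]

lemma cdistR_of_gt' {i j : Fin n} (h : j.val < i.val) : cdistR i j = j.val + n - i.val := by
  have hi := i.isLt
  exact Nat.mod_eq_of_lt (by omega)

lemma shiftR_cdistR (i j : Fin n) : shiftR i (cdistR i j) = j := by
  have hi := i.isLt; have hj := j.isLt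
  apply Fin.ext
  show (i.val + (j.val + n - i.val) % n) % n = j.val
  rw [Nat.add_mod_mod]
  have e : i.val + (j.val + n - i.val) = j.val + n := by omega
  rw [e, Nat.add_mod_right, Nat.mod_eq_of_lt hj]

lemma shiftL_cdistL (i j : Fin n) : shiftL i (cdistL i j) = j := by
  have hi := i.isLt; have hj := j.isLt
  apply Fin.ext
  show (i.val + n - ((i.val + n - j.val) % n) % n) % n = j.val
  rw [Nat.mod_mod_of_dvd _ dvd_rfl]
  rcases le_or_gt j.val i.val with h | h
  · have hv : (i.val + n - j.val) % n = i.val - j.val := by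
      have e1 : i.val + n - j.val = (i.val - j.val) + n := by omega
      rw [e1, Nat.add_mod_right]; exact Nat.mod_eq_of_lt (by omega)
    rw [hv]
    have e2 : i.val + n - (i.val - j.val) = j.val + n := by omega
    rw [e2, Nat.add_mod_right]; exact Nat.mod_eq_of_lt hj
  · have hv : (i.val + n - j.val) % n = i.val + n - j.val := Nat.mod_eq_of_lt (by omega)
    rw [hv]
    have e2 : i.val + n - (i.val + n - j.val) = j.val := by omega
    rw [e2]; exact Nat.mod_eq_of_lt hj

lemma firstRight_mem (i : Fin n) (s : Finset (Fin n)) (h : s.Nonempty) :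
    firstRight i s h ∈ s := by
  obtain ⟨j, hj, hcd⟩ := Finset.mem_image.1 (Finset.min'_mem (s.image (cdistR i)) (h.image _))
  rw [firstRight, ← hcd, shiftR_cdistR]; exact hj

lemma firstRight_min (i : Fin n) (s : Finset (Fin n)) (h : s.Nonempty) {j : Fin n}
    (hj : j ∈ s) : cdistR i (firstRight i s h) ≤ cdistR i j := by
  obtain ⟨j0, hj0, hcd⟩ := Finset.mem_image.1 (Finset.min'_mem (s.image (cdistR i)) (h.image _))
  have h1 : firstRight i s h = j0 := by rw [firstRight, ← hcd, shiftR_cdistR]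
  rw [h1, hcd]
  exact Finset.min'_le _ _ (Finset.mem_image_of_mem _ hj)

lemma firstLeft_mem (i : Fin n) (s : Finset (Fin n)) (h : s.Nonempty) :
    firstLeft i s h ∈ s := by
  obtain ⟨j, hj, hcd⟩ := Finset.mem_image.1 (Finset.min'_mem (s.image (cdistL i)) (h.image _))
  rw [firstLeft, ← hcd, shiftL_cdistL]; exact hj

variable (u : Word n) (σ : Equiv.Perm (Fin n))

/-- frame lemma for phase I folds: the free set shrinks, and values outside the
initial free set are unchanged -/
lemma foldl_step1_frame (l : List (Fin n)) (st : Finset (Fin n) × Word n) :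
    (l.foldl (step1 u σ) st).1 ⊆ st.1 ∧
    (∀ j, j ∉ st.1 → (l.foldl (step1 u σ) st).2 j = st.2 j) := by
  induction l generalizing st with
  | nil => exact ⟨subset_rfl, fun _ _ => rfl⟩
  | cons a l ih =>
    rw [List.foldl_cons]
    by_cases h : st.1.Nonempty
    · have hstep : step1 u σ st a =
          (st.1.erase (firstLeft (σ a) st.1 h),
           Function.update st.2 (firstLeft (σ a) st.1 h) (u (σ a) + 1)) := by
        rw [step1, dif_pos h]
      rw [hstep]
      obtain ⟨ih1, ih2⟩ := ih (st.1.erase (firstLeft (σ a) st.1 h),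
           Function.update st.2 (firstLeft (σ a) st.1 h) (u (σ a) + 1))
      constructor
      · exact ih1.trans (Finset.erase_subset _ _)
      · intro j hj
        rw [ih2 j (fun hc => hj (Finset.mem_of_mem_erase hc))]
        exact Function.update_of_ne (fun hc => hj (by rw [hc]; exact firstLeft_mem _ _ _)) _ _
    · have hstep : step1 u σ st a = st := by rw [step1, dif_neg h]
      rw [hstep]; exact ih st

/-- card lemma for phase I folds -/
lemma foldl_step1_card (l : List (Fin n)) (st : Finset (Fin n) × Word n)
    (h : l.length ≤ st.1.card) :
    (l.foldl (step1 u σ) st).1.card = st.1.card - l.length := by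
  induction l generalizing st with
  | nil => simp
  | cons a l ih =>
    have hne : st.1.Nonempty := Finset.card_pos.1 (by simp at h; omega)
    rw [List.foldl_cons]
    have hstep : step1 u σ st a =
        (st.1.erase (firstLeft (σ a) st.1 hne),
         Function.update st.2 (firstLeft (σ a) st.1 hne) (u (σ a) + 1)) := by
      rw [step1, dif_pos hne]
    rw [hstep]
    have hc : (st.1.erase (firstLeft (σ a) st.1 hne)).card = st.1.card - 1 :=
      Finset.card_erase_of_mem (firstLeft_mem _ _ _)
    rw [ih _ (by rw [hc]; simp at h ⊢; omega), hc]
    simp; omega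

/-- every site removed from the free set during a phase I fold was assigned an
incremented letter from the processed list -/
lemma foldl_step1_values (l : List (Fin n)) (st : Finset (Fin n) × Word n)
    (j : Fin n) (hj : j ∈ st.1) (hj' : j ∉ (l.foldl (step1 u σ) st).1) :
    ∃ a ∈ l, (l.foldl (step1 u σ) st).2 j = u (σ a) + 1 := by
  induction l generalizing st with
  | nil => exact absurd hj (by simpa using hj')
  | cons a l ih =>
    have hne : st.1.Nonempty := ⟨j, hj⟩
    rw [List.foldl_cons] at hj' ⊢
    have hstep : step1 u σ st a =
        (st.1.erase (firstLeft (σ a) st.1 hne),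
         Function.update st.2 (firstLeft (σ a) st.1 hne) (u (σ a) + 1)) := by
      rw [step1, dif_pos hne]
    rw [hstep] at hj' ⊢
    set st' : Finset (Fin n) × Word n :=
        (st.1.erase (firstLeft (σ a) st.1 hne),
         Function.update st.2 (firstLeft (σ a) st.1 hne) (u (σ a) + 1)) with hst'
    by_cases hja : j = firstLeft (σ a) st.1 hne
    · refine ⟨a, List.mem_cons_self, ?_⟩
      have hnotin : j ∉ st'.1 := by rw [hst']; subst hja; exact Finset.notMem_erase _ _
      rw [(foldl_step1_frame u σ l st').2 j hnotin, hst']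
      subst hja; simp
    · exact (ih st' (Finset.mem_erase.2 ⟨hja, hj⟩) hj').imp
        (fun b hb => ⟨List.mem_cons_of_mem a hb.1, hb.2⟩)

/-- the state of phase II after processing the first `m` letters -/
noncomputable def run2 (q : Finset (Fin n)) (m : ℕ) : Finset (Fin n) × Word n :=
  ((List.finRange n).take m).foldl (step2 u σ) (q, fun _ => 0)

/-- the landing site of the `p`-th letter during phase II -/
noncomputable def land2 (q : Finset (Fin n)) (p : Fin n) : Fin n :=
  if h : (run2 u σ q p.val).1.Nonempty then firstRight (σ p) (run2 u σ q p.val).1 h else p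

lemma run2_succ (q : Finset (Fin n)) {m : ℕ} (hm : m < n) :
    run2 u σ q (m + 1) = step2 u σ (run2 u σ q m) ⟨m, hm⟩ := by
  have hlen : m < (List.finRange n).length := by rw [List.length_finRange]; exact hm
  have htake : (List.finRange n).take (m + 1)
      = (List.finRange n).take m ++ [⟨m, hm⟩] := by
    rw [List.take_succ, List.getElem?_eq_getElem hlen]
    congr 1
    simp [List.getElem_finRange]
  rw [run2, htake, List.foldl_append]
  rfl

/-- the main invariant of phase II -/
lemma run2_inv (q : Finset (Fin n)) (m : ℕ) (hm : m ≤ q.card) :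
    (run2 u σ q m).1 ⊆ q ∧ (run2 u σ q m).1.card = q.card - m ∧
    (∀ p : Fin n, p.val < m → land2 u σ q p ∈ q ∧ land2 u σ q p ∉ (run2 u σ q m).1 ∧
       (run2 u σ q m).2 (land2 u σ q p) = u (σ p)) ∧
    (∀ j ∈ q, j ∉ (run2 u σ q m).1 → ∃ p : Fin n, p.val < m ∧ land2 u σ q p = j) := by
  have hqn : q.card ≤ n := by
    have := Finset.card_le_univ q
    simpa using this
  induction m with
  | zero =>
    refine ⟨subset_rfl, by simp [run2], fun p hp => absurd hp (by omega), ?_⟩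
    intro j hj hj'
    exact absurd hj (by simpa [run2] using hj')
  | succ m ih =>
    have hm' : m ≤ q.card := by omega
    obtain ⟨ih1, ih2, ih3, ih4⟩ := ih hm'
    have hmn : m < n := by omega
    have hne : (run2 u σ q m).1.Nonempty := Finset.card_pos.1 (by rw [ih2]; omega)
    set pm : Fin n := ⟨m, hmn⟩ with hpm
    set j0 : Fin n := firstRight (σ pm) (run2 u σ q m).1 hne with hj0
    have hstep : run2 u σ q (m + 1) =
        ((run2 u σ q m).1.erase j0,
         Function.update (run2 u σ q m).2 j0 (u (σ pm))) := by
      rw [run2_succ u σ q hmn, step2, dif_pos hne]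
    have hj0mem : j0 ∈ (run2 u σ q m).1 := firstRight_mem _ _ _
    have hland : land2 u σ q pm = j0 := by
      rw [land2, dif_pos hne]
    refine ⟨?_, ?_, ?_, ?_⟩
    · rw [hstep]
      exact (Finset.erase_subset _ _).trans ih1
    · rw [hstep]
      show ((run2 u σ q m).1.erase j0).card = q.card - (m + 1)
      rw [Finset.card_erase_of_mem hj0mem, ih2]; omega
    · intro p hp
      rcases Nat.lt_or_ge p.val m with hpm' | hpm'
      · obtain ⟨hq', hnf', hval'⟩ := ih3 p hpm'
        refine ⟨hq', ?_, ?_⟩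
        · rw [hstep]
          exact fun hc => hnf' (Finset.mem_of_mem_erase hc)
        · rw [hstep]
          show Function.update (run2 u σ q m).2 j0 (u (σ pm)) (land2 u σ q p) = u (σ p)
          rw [Function.update_of_ne (fun hc => hnf' (by rw [hc]; exact hj0mem)), hval']
      · have hpeq : p = pm := Fin.ext (by show p.val = m; omega)
        rw [hpeq, hland]
        refine ⟨ih1 hj0mem, ?_, ?_⟩
        · rw [hstep]; exact Finset.notMem_erase _ _
        · rw [hstep]
          show Function.update (run2 u σ q m).2 j0 (u (σ pm)) j0 = u (σ pm)
          simp
    · intro j hj hj'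
      rw [hstep] at hj'
      by_cases hjf : j ∈ (run2 u σ q m).1
      · have : j = j0 := by
          by_contra hc
          exact hj' (Finset.mem_erase.2 ⟨hc, hjf⟩)
        exact ⟨pm, by show m < m + 1; omega, by rw [hland, this]⟩
      · obtain ⟨p, hp1, hp2⟩ := ih4 j hj hjf
        exact ⟨p, by omega, hp2⟩


/-! ### Gale order from counting -/

lemma sort_rev_getD (A : Finset ℕ) {k : ℕ} (hk : k < A.card) :
    (A.sort (· ≤ ·)).reverse.getD k 0 =
      (A.sort (· ≤ ·))[A.card - 1 - k]'(by
        rw [Finset.length_sort]; omega) := by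
  have hl : (A.sort (· ≤ ·)).length = A.card := Finset.length_sort _
  rw [List.getD_eq_getElem _ _ (by rw [List.length_reverse, hl]; exact hk),
    List.getElem_reverse]
  congr 1
  omega

lemma card_filter_ge_sort (A : Finset ℕ) {k : ℕ} (hk : k < A.card) :
    k + 1 ≤ (A.filter (fun x => (A.sort (· ≤ ·)).reverse.getD k 0 ≤ x)).card := by
  classical
  set l := A.sort (· ≤ ·) with hldef
  have hl : l.length = A.card := Finset.length_sort _
  have hnd : l.Nodup := Finset.sort_nodup _ _
  have hs : l.Pairwise (· ≤ ·) := Finset.pairwise_sort _ _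
  set m := A.card - 1 - k with hm
  have hb : (A.sort (· ≤ ·)).reverse.getD k 0 = l[m]'(by rw [hl]; omega) :=
    sort_rev_getD A hk
  rw [hb]
  have hsub : (l.drop m).toFinset ⊆ A.filter (fun x => l[m]'(by rw [hl]; omega) ≤ x) := by
    intro x hx
    rw [List.mem_toFinset] at hx
    obtain ⟨i, hi, hxe⟩ := List.mem_iff_getElem.1 hx
    have hix : (l.drop m)[i] = l[m + i]'(by
        have : (l.drop m).length = l.length - m := List.length_drop; omega) := List.getElem_drop
    rw [Finset.mem_filter]
    constructor
    · rw [← Finset.mem_sort (α := ℕ) (· ≤ ·)]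
      exact List.mem_of_mem_drop hx
    · rw [← hxe, hix]
      rcases Nat.eq_or_lt_of_le (Nat.le_add_right m i) with he | hlt
      · simp [← he]
      · exact (List.pairwise_iff_getElem.1 hs) m (m + i) (by rw [hl]; omega)
          (by have : (l.drop m).length = l.length - m := List.length_drop; omega) hlt
  calc k + 1 = (l.drop m).toFinset.card := by
        rw [List.toFinset_card_of_nodup (hnd.sublist (List.drop_sublist m l))]
        rw [List.length_drop]; omega
    _ ≤ _ := Finset.card_le_card hsub

lemma le_sort_rev_of_card (A : Finset ℕ) {k b : ℕ} (hk : k < A.card)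
    (hcard : k + 1 ≤ (A.filter (fun x => b ≤ x)).card) :
    b ≤ (A.sort (· ≤ ·)).reverse.getD k 0 := by
  classical
  by_contra hba
  push_neg at hba
  set l := A.sort (· ≤ ·) with hldef
  have hl : l.length = A.card := Finset.length_sort _
  have hs : l.Pairwise (· ≤ ·) := Finset.pairwise_sort _ _
  set m := A.card - 1 - k with hm
  have hb : (A.sort (· ≤ ·)).reverse.getD k 0 = l[m]'(by rw [hl]; omega) :=
    sort_rev_getD A hk
  rw [hb] at hba
  have hsub : A.filter (fun x => b ≤ x) ⊆ (l.drop (m + 1)).toFinset := by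
    intro x hx
    rw [Finset.mem_filter] at hx
    obtain ⟨hxA, hbx⟩ := hx
    have hxl : x ∈ l := (Finset.mem_sort (α := ℕ) (· ≤ ·)).2 hxA
    obtain ⟨i, hi, hxe⟩ := List.mem_iff_getElem.1 hxl
    have him : m < i := by
      by_contra hmi
      push_neg at hmi
      have : x ≤ l[m]'(by rw [hl]; omega) := by
        rcases Nat.eq_or_lt_of_le hmi with he | hlt
        · rw [← hxe]; exact le_of_eq (by congr 1 <;> omega)
        · rw [← hxe]
          exact (List.pairwise_iff_getElem.1 hs) i m hi (by rw [hl]; omega) hlt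
      omega
    rw [List.mem_toFinset, List.mem_iff_getElem]
    refine ⟨i - (m + 1), by rw [List.length_drop]; omega, ?_⟩
    rw [List.getElem_drop]
    rw [← hxe]; congr 1; omega
  have hle := Finset.card_le_card hsub
  have : (l.drop (m + 1)).toFinset.card ≤ l.length - (m + 1) := by
    calc (l.drop (m+1)).toFinset.card ≤ (l.drop (m+1)).length := List.toFinset_card_le _
      _ = l.length - (m+1) := List.length_drop
  omega

lemma dom_of_counts (A B : Finset ℕ) (hc : A.card = B.card)
    (hcnt : ∀ m : ℕ, (B.filter (fun x => m ≤ x)).card ≤ (A.filter (fun x => m ≤ x)).card) :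
    Dom A B := by
  refine ⟨hc, fun k hk => ?_⟩
  apply le_sort_rev_of_card A hk
  calc k + 1 ≤ (B.filter (fun x => (B.sort (· ≤ ·)).reverse.getD k 0 ≤ x)).card :=
        card_filter_ge_sort B (hc ▸ hk)
    _ ≤ _ := hcnt _

end InterlaceAux

/-- the set of sites (as natural numbers) where the word `u` has the letter `h` -/
def level {n : ℕ} (u : Word n) (h : ℕ) : Finset ℕ :=
  (Finset.univ.filter (fun p => u p = h)).image (fun p : Fin n => (p : ℕ))

/-- If `q(u)` has at least one letter equal to `t`, is weakly decreasing up to level `t`,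
and has exactly `|q|` letters at most `t`, then for each `1 ≤ h ≤ t - 1` one has
`{p : q(u)_p = h} ⪰ {p : u_p = h} ≫ {p : q(u)_p = h + 1}`. -/
theorem queue_act_interlace {n t : ℕ} [NeZero n] (ht : 0 < t) (u : Word n)
    (q : Finset (Fin n))
    (h1 : ∃ p, act q u p = t)
    (h2 : WDUpTo t (act q u))
    (h3 : (Finset.univ.filter (fun p => act q u p ≤ t)).card = q.card) :
    ∀ h, 1 ≤ h → h ≤ t - 1 →
      Dom (level (act q u) h) (level u h) ∧
      Gg (level u h) (level (act q u) (h + 1)) := by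
  classical
  set σ : Equiv.Perm (Fin n) := Tuple.sort u with hσ
  set w : Word n := act q u with hw
  have hmono : Monotone (u ∘ σ) := Tuple.monotone_sort u
  have hwdef : w = (((List.finRange n).drop q.card).reverse.foldl (step1 u σ)
      (qᶜ, (run2 u σ q q.card).2)).2 := by
    rw [hw, hσ]; rfl
  have hqn : q.card ≤ n := by simpa using Finset.card_le_univ q
  obtain ⟨inv1, inv2, inv3, inv4⟩ := run2_inv u σ q q.card le_rfl
  have hempty : (run2 u σ q q.card).1 = ∅ := Finset.card_eq_zero.1 (by rw [inv2]; omega)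
  have hwq : ∀ j ∈ q, w j = (run2 u σ q q.card).2 j := by
    intro j hj
    rw [hwdef]
    exact (foldl_step1_frame u σ _ _).2 j (by simp [hj])
  have hlandq : ∀ p : Fin n, p.val < q.card → land2 u σ q p ∈ q := fun p hp => (inv3 p hp).1
  have hwland : ∀ p : Fin n, p.val < q.card → w (land2 u σ q p) = u (σ p) := by
    intro p hp; rw [hwq _ (hlandq p hp)]; exact (inv3 p hp).2.2
  have hsurj : ∀ j ∈ q, ∃ p : Fin n, p.val < q.card ∧ land2 u σ q p = j := by
    intro j hj; exact inv4 j hj (by rw [hempty]; exact Finset.notMem_empty j)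
  -- values on the complement of q
  have hwc : ∀ j : Fin n, j ∉ q → ∃ p : Fin n, q.card ≤ p.val ∧ w j = u (σ p) + 1 := by
    intro j hj
    have hlen : (((List.finRange n).drop q.card).reverse).length = n - q.card := by simp
    have hcard : (qᶜ : Finset (Fin n)).card = n - q.card := by
      rw [Finset.card_compl]; simp
    have hfin : (((List.finRange n).drop q.card).reverse.foldl (step1 u σ)
        (qᶜ, (run2 u σ q q.card).2)).1.card = 0 := by
      rw [foldl_step1_card u σ _ _ (by rw [hlen, hcard]), hlen, hcard]
      omega
    have hnotin : j ∉ (((List.finRange n).drop q.card).reverse.foldl (step1 u σ)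
        (qᶜ, (run2 u σ q q.card).2)).1 := by
      intro hc
      have hpos := Finset.card_pos.2 ⟨j, hc⟩
      omega
    obtain ⟨a, ha, hval⟩ := foldl_step1_values u σ _ _ j (Finset.mem_compl.2 hj) hnotin
    refine ⟨a, ?_, by rw [hwdef]; exact hval⟩
    rw [List.mem_reverse] at ha
    obtain ⟨i, hi, hie⟩ := List.mem_iff_getElem.1 ha
    have hlen2 : i < (List.finRange n).length - q.card := by
      simpa using hi
    have : ((List.finRange n).drop q.card)[i] =
        (List.finRange n)[q.card + i]'(by omega) := List.getElem_drop
    rw [this, List.getElem_finRange] at hie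
    rw [← hie]
    simp
  have hfilterk := h3
  -- letters processed in phase II are at most t
  have hB2 : ∀ p : Fin n, p.val < q.card → u (σ p) ≤ t := by
    by_contra hcon
    push_neg at hcon
    obtain ⟨p0, hp0k, hp0t⟩ := hcon
    have hsub : Finset.univ.filter (fun p => w p ≤ t) ⊆ q.erase (land2 u σ q p0) := by
      intro j hj
      rw [Finset.mem_filter] at hj
      have hjq : j ∈ q := by
        by_contra hjc
        obtain ⟨p, hpk, hpe⟩ := hwc j hjc
        have hm : u (σ p0) ≤ u (σ p) := hmono (Fin.le_def.2 (by omega))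
        omega
      refine Finset.mem_erase.2 ⟨?_, hjq⟩
      intro hc
      have hval := hwland p0 hp0k
      rw [← hc] at hval
      omega
    have hcle := Finset.card_le_card hsub
    rw [hfilterk, Finset.card_erase_of_mem (hlandq p0 hp0k)] at hcle
    omega
  -- letters processed in phase I are at least t
  have hB1 : ∀ p : Fin n, q.card ≤ p.val → t ≤ u (σ p) := by
    by_contra hcon
    push_neg at hcon
    obtain ⟨p1, hp1k, hp1t⟩ := hcon
    have hqsub : q ⊆ Finset.univ.filter (fun p => w p ≤ t) := by
      intro j hj
      obtain ⟨p, hpk, hpl⟩ := hsurj j hj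
      have hwj : w j = u (σ p) := by rw [← hpl]; exact hwland p hpk
      have hm : u (σ p) ≤ u (σ p1) := hmono (Fin.le_def.2 (by omega))
      rw [Finset.mem_filter]
      exact ⟨Finset.mem_univ j, by omega⟩
    have heq : q = Finset.univ.filter (fun p => w p ≤ t) :=
      Finset.eq_of_subset_of_card_le hqsub (le_of_eq hfilterk)
    obtain ⟨js, hjs⟩ := h1
    have hjsq : js ∈ q := by
      rw [heq, Finset.mem_filter]
      exact ⟨Finset.mem_univ js, le_of_eq hjs⟩
    obtain ⟨p, hpk, hpl⟩ := hsurj js hjsq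
    have hwjs : w js = u (σ p) := by rw [← hpl]; exact hwland p hpk
    have hm : u (σ p) ≤ u (σ p1) := hmono (Fin.le_def.2 (by omega))
    omega
  have hB1site : ∀ j : Fin n, j ∉ q → t < w j := by
    intro j hj
    obtain ⟨p, hpk, hpe⟩ := hwc j hj
    have := hB1 p hpk
    omega
  have hB2site : ∀ j ∈ q, w j ≤ t := by
    intro j hj
    obtain ⟨p, hpk, hpl⟩ := hsurj j hj
    rw [← hpl, hwland p hpk]
    exact hB2 p hpk
  obtain ⟨js, hjs⟩ := h1
  have hjsq : js ∈ q := by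
    by_contra hc
    have := hB1site js hc
    omega
  have hqne : q.Nonempty := ⟨js, hjsq⟩
  have hjminq : q.min' hqne ∈ q := q.min'_mem hqne
  have hwjmin : w (q.min' hqne) = t := by
    rcases eq_or_lt_of_le (q.min'_le js hjsq) with he | hlt
    · rw [he, hjs]
    · have h2' := h2 (q.min' hqne) js hlt (le_of_eq hjs)
      have := hB2site (q.min' hqne) hjminq
      omega
  have hN1 : ∀ p : Fin n, u p < t → (σ.symm p).val < q.card := by
    intro p hp
    by_contra hc
    push_neg at hc
    have := hB1 (σ.symm p) hc
    rw [Equiv.apply_symm_apply] at this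
    omega
  have hfree_of : ∀ p' : Fin n, p'.val < q.card → ∀ j ∈ q, u (σ p') < w j →
      j ∈ (run2 u σ q p'.val).1 := by
    intro p' hp' j hj hlt
    by_contra hc
    obtain ⟨p'', hp''1, hp''2⟩ := (run2_inv u σ q p'.val (le_of_lt hp')).2.2.2 j hj hc
    have hw'' : w j = u (σ p'') := by rw [← hp''2]; exact hwland p'' (by omega)
    have hm : u (σ p'') ≤ u (σ p') := hmono (Fin.le_def.2 (by omega))
    omega
  have hfree_ne : ∀ p' : Fin n, p'.val < q.card → (run2 u σ q p'.val).1.Nonempty := by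
    intro p' hp'
    apply Finset.card_pos.1
    rw [(run2_inv u σ q p'.val (le_of_lt hp')).2.1]
    omega
  have hland_def : ∀ (p' : Fin n) (hp' : p'.val < q.card),
      land2 u σ q p' = firstRight (σ p') (run2 u σ q p'.val).1 (hfree_ne p' hp') := by
    intro p' hp'
    rw [land2, dif_pos (hfree_ne p' hp')]
  have hland_mem : ∀ (p' : Fin n), p'.val < q.card →
      land2 u σ q p' ∈ (run2 u σ q p'.val).1 := by
    intro p' hp'
    rw [hland_def p' hp']
    exact firstRight_mem _ _ _
  -- per-level claims
  intro h hh1 hht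
  have hhlt : h < t := by omega
  have hht1 : h + 1 ≤ t := by omega
  constructor
  · -- Dom
    have hlevB : level u h =
        (Finset.univ.filter (fun p : Fin n => u p = h)).image (fun p : Fin n => (p : ℕ)) := rfl
    have hlevA : level w h =
        (Finset.univ.filter (fun p : Fin n => w p = h)).image (fun p : Fin n => (p : ℕ)) := rfl
    set f : Fin n → Fin n := fun p => land2 u σ q (σ.symm p) with hf
    have hkey : ∀ p : Fin n, u p = h →
        (σ.symm p).val < q.card ∧ w (f p) = h ∧ p.val ≤ (f p).val := by
      intro p hp
      have hp'k : (σ.symm p).val < q.card := hN1 p (by omega)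
      have hup' : u (σ (σ.symm p)) = h := by rw [Equiv.apply_symm_apply]; exact hp
      have hwf : w (f p) = h := by
        rw [hf]
        show w (land2 u σ q (σ.symm p)) = h
        rw [hwland _ hp'k, hup']
      refine ⟨hp'k, hwf, ?_⟩
      -- no wrapping
      by_contra hc
      push_neg at hc
      have hLp : (f p).val < p.val := hc
      have hσp : σ (σ.symm p) = p := Equiv.apply_symm_apply σ p
      have hjmfree : q.min' hqne ∈ (run2 u σ q (σ.symm p).val).1 :=
        hfree_of (σ.symm p) hp'k (q.min' hqne) hjminq (by rw [hup', hwjmin]; omega)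
      have hmin1 : cdistR p (f p) ≤ cdistR p (q.min' hqne) := by
        have := firstRight_min (σ (σ.symm p)) (run2 u σ q (σ.symm p).val).1
          (hfree_ne (σ.symm p) hp'k) hjmfree
        rw [hσp] at this
        rw [hf]
        show cdistR p (land2 u σ q (σ.symm p)) ≤ _
        rw [hland_def (σ.symm p) hp'k, hσp]
        exact this
      have hjp : (q.min' hqne).val < p.val := by
        by_contra hge
        push_neg at hge
        rw [cdistR_of_le' hge, cdistR_of_gt' hLp] at hmin1
        have := (q.min' hqne).isLt
        have := p.isLt
        omega
      rw [cdistR_of_gt' hLp, cdistR_of_gt' hjp] at hmin1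
      have hple := p.isLt
      have hLle : (f p).val ≤ (q.min' hqne).val := by omega
      have hfq : f p ∈ q := by
        rw [hf]
        show land2 u σ q (σ.symm p) ∈ q
        exact hlandq _ hp'k
      have hjminL : (q.min' hqne).val ≤ (f p).val := Fin.le_def.1 (q.min'_le _ hfq)
      have hLeq : f p = q.min' hqne := Fin.ext (le_antisymm hLle hjminL)
      have hwf : w (f p) = h := by
        rw [hf]
        show w (land2 u σ q (σ.symm p)) = h
        rw [hwland _ hp'k, hup']
      rw [hLeq, hwjmin] at hwf
      omega
    have hinj : ∀ p1 : Fin n, u p1 = h → ∀ p2 : Fin n, u p2 = h → f p1 = f p2 → p1 = p2 := by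
      intro p1 hp1 p2 hp2 hfe
      have h1k := (hkey p1 hp1).1
      have h2k := (hkey p2 hp2).1
      by_contra hne
      have hsne : σ.symm p1 ≠ σ.symm p2 := fun hc => hne (σ.symm.injective hc)
      have key : ∀ a b : Fin n, a.val < b.val → b.val < q.card →
          land2 u σ q a ≠ land2 u σ q b := by
        intro a b hab hbk hle
        have hnotin : land2 u σ q a ∉ (run2 u σ q b.val).1 :=
          ((run2_inv u σ q b.val (le_of_lt hbk)).2.2.1 a hab).2.1
        have hin : land2 u σ q b ∈ (run2 u σ q b.val).1 := hland_mem b hbk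
        rw [hle] at hnotin
        exact hnotin hin
      rcases lt_trichotomy (σ.symm p1).val (σ.symm p2).val with hlt | heq | hgt
      · exact key _ _ hlt h2k hfe
      · exact hsne (Fin.ext heq)
      · exact key _ _ hgt h1k hfe.symm
    have hsurjf : ∀ j : Fin n, w j = h → ∃ p : Fin n, u p = h ∧ f p = j := by
      intro j hj
      have hjq : j ∈ q := by
        by_contra hc
        have := hB1site j hc
        omega
      obtain ⟨p'', hp''k, hp''l⟩ := hsurj j hjq
      have hval : u (σ p'') = h := by
        have := hwland p'' hp''k
        rw [hp''l] at this
        omega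
      refine ⟨σ p'', hval, ?_⟩
      rw [hf]
      show land2 u σ q (σ.symm (σ p'')) = j
      rw [Equiv.symm_apply_apply]
      exact hp''l
    -- cardinalities
    have hcardeq : (level w h).card = (level u h).card := by
      rw [hlevA, hlevB, Finset.card_image_of_injective _ Fin.val_injective,
        Finset.card_image_of_injective _ Fin.val_injective]
      refine (Finset.card_bij (fun p _ => f p) ?_ ?_ ?_).symm
      · intro p hp
        rw [Finset.mem_filter] at hp
        rw [Finset.mem_filter]
        exact ⟨Finset.mem_univ _, (hkey p hp.2).2.1⟩
      · intro p1 hp1 p2 hp2 he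
        rw [Finset.mem_filter] at hp1 hp2
        exact hinj p1 hp1.2 p2 hp2.2 he
      · intro j hjmem
        rw [Finset.mem_filter] at hjmem
        obtain ⟨p, hp, hpf⟩ := hsurjf j hjmem.2
        exact ⟨p, Finset.mem_filter.2 ⟨Finset.mem_univ _, hp⟩, hpf⟩
    have hcnt : ∀ m : ℕ, ((level u h).filter (fun x => m ≤ x)).card ≤
        ((level w h).filter (fun x => m ≤ x)).card := by
      intro m
      rw [hlevA, hlevB, Finset.filter_image, Finset.filter_image,
        Finset.card_image_of_injective _ Fin.val_injective,
        Finset.card_image_of_injective _ Fin.val_injective]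
      apply Finset.card_le_card_of_injOn f
      · intro p hp
        rw [Finset.mem_coe, Finset.mem_filter] at hp
        obtain ⟨hp1, hp2⟩ := hp
        rw [Finset.mem_filter] at hp1
        rw [Finset.mem_coe, Finset.mem_filter]
        obtain ⟨hk1, hk2, hk3⟩ := hkey p hp1.2
        exact ⟨Finset.mem_filter.2 ⟨Finset.mem_univ _, hk2⟩, le_trans hp2 hk3⟩
      · intro p1 hp1 p2 hp2 he
        rw [Finset.mem_coe, Finset.mem_filter] at hp1 hp2
        have e1 := Finset.mem_filter.1 hp1.1
        have e2 := Finset.mem_filter.1 hp2.1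
        exact hinj p1 e1.2 p2 e2.2 he
    exact dom_of_counts _ _ hcardeq hcnt
  · -- Gg
    intro a ha b hb
    obtain ⟨p, hpmem, rfl⟩ := Finset.mem_image.1 ha
    obtain ⟨j, hjmem, rfl⟩ := Finset.mem_image.1 hb
    have hup : u p = h := (Finset.mem_filter.1 hpmem).2
    have hwj : w j = h + 1 := (Finset.mem_filter.1 hjmem).2
    show j.val < p.val
    have hp'k : (σ.symm p).val < q.card := hN1 p (by omega)
    have hσp : σ (σ.symm p) = p := Equiv.apply_symm_apply σ p
    have hup' : u (σ (σ.symm p)) = h := by rw [hσp]; exact hup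
    have hjq : j ∈ q := by
      by_contra hc
      have := hB1site j hc
      omega
    have hjfree : j ∈ (run2 u σ q (σ.symm p).val).1 :=
      hfree_of (σ.symm p) hp'k j hjq (by omega)
    set L : Fin n := land2 u σ q (σ.symm p) with hL
    have hwL : w L = h := by
      rw [hL]
      show w (land2 u σ q (σ.symm p)) = h
      rw [hwland _ hp'k, hup']
    have hLq : L ∈ q := hlandq _ hp'k
    have hmin1 : cdistR p L ≤ cdistR p j := by
      have := firstRight_min (σ (σ.symm p)) (run2 u σ q (σ.symm p).val).1
        (hfree_ne (σ.symm p) hp'k) hjfree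
      rw [hσp] at this
      rw [hL]
      show cdistR p (land2 u σ q (σ.symm p)) ≤ _
      rw [hland_def (σ.symm p) hp'k, hσp]
      exact this
    by_contra hc
    push_neg at hc
    have hcd : cdistR p j = j.val - p.val := cdistR_of_le' hc
    rcases le_or_gt p.val L.val with hpL | hpL
    · rw [hcd, cdistR_of_le' hpL] at hmin1
      have hLj : L.val ≤ j.val := by omega
      rcases eq_or_lt_of_le hLj with he | hlt
      · have : L = j := Fin.ext he
        rw [this, hwj] at hwL
        omega
      · have h2' := h2 L j (Fin.lt_def.2 hlt) (by omega)
        omega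
    · rw [hcd, cdistR_of_gt' hpL] at hmin1
      have := j.isLt
      have := p.isLt
      omega

end MLQ
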